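/- arXiv:1707.00463 — 2 statements merged into one kernel-verified Lean document; each statement's English description precedes it below -/
import Mathlib

section
/- Let φ : ℝ → ℝ be three times continuously differentiable with |φ'''(t)| ≤ M for all t, let a ∈ ℝ, ε > 0, J ∈ ℕ, and let x : Fin J → ℝ satisfy |x j - a| ≤ ε for all j; write d j = x j - a, S2 = Σ_j (d j)², S3 = Σ_j (d j)³, S4 = Σ_j (d j)⁴, Δ = S2·S4 - S3², b1 = Σ_j (d j)·(φ(x j) - φ(a)), b2 = Σ_j (d j)²·(φ(x j) - φ(a)). Assume Δ ≥ c·ε⁶ for some c > 0, and define the least-squares derivative estimate a1 = (S4·b1 - S3·b2)/Δ. Then |a1 - φ'(a)| ≤ (J²·M/(3c))·ε². -/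
private lemma itDW_eq (φ : ℝ → ℝ) (hφ : ContDiff ℝ 3 φ) {u v : ℝ} (huv : u < v)
    {m : ℕ} (hm : (m : WithTop ℕ∞) ≤ 3) {y : ℝ} (hy : y ∈ Set.Icc u v) :
    iteratedDerivWithin m φ (Set.Icc u v) y = iteratedDeriv m φ y := by
  have h := contDiff_iff_ftaylorSeries.mp hφ
  have hOn : HasFTaylorSeriesUpToOn 3 φ (ftaylorSeries ℝ φ) (Set.Icc u v) :=
    (hasFTaylorSeriesUpToOn_univ_iff.mpr h).mono (Set.subset_univ _)
  rw [iteratedDerivWithin_eq_iteratedFDerivWithin, iteratedDeriv_eq_iteratedFDeriv,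
    ← hOn.eq_iteratedFDerivWithin_of_uniqueDiffOn hm (uniqueDiffOn_Icc huv) hy,
    h.eq_iteratedFDeriv hm y]

private lemma taylor_right_aux (φ : ℝ → ℝ) (M : ℝ) (hφ : ContDiff ℝ 3 φ)
    (hM : ∀ t, |iteratedDeriv 3 φ t| ≤ M) {a y : ℝ} (h : a < y) :
    |φ y - φ a - iteratedDeriv 1 φ a * (y - a) - iteratedDeriv 2 φ a / 2 * (y - a) ^ 2|
      ≤ M / 6 * (y - a) ^ 3 := by
  simp only [iteratedDeriv_one]
  have hcd : ContDiffOn ℝ 2 φ (Set.Icc a y) := (hφ.of_le (by norm_num)).contDiffOn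
  have hdiff : DifferentiableOn ℝ (iteratedDerivWithin 2 φ (Set.Icc a y)) (Set.Ioo a y) :=
    (hφ.contDiffOn.differentiableOn_iteratedDerivWithin (by norm_num)
      (uniqueDiffOn_Icc h)).mono Set.Ioo_subset_Icc_self
  obtain ⟨ξ, hξ, hrem⟩ := taylor_mean_remainder_lagrange (n := 2) h.ne
    (by rw [Set.uIcc_of_le h.le]; exact hcd)
    (by rw [Set.uIcc_of_le h.le, Set.uIoo_of_le h.le]; exact hdiff)
  rw [Set.uIoo_of_le h.le] at hξ
  rw [Set.uIcc_of_le h.le] at hrem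
  have hP : taylorWithinEval φ 2 (Set.Icc a y) a y =
      φ a + iteratedDeriv 1 φ a * (y - a) + iteratedDeriv 2 φ a / 2 * (y - a) ^ 2 := by
    rw [taylor_within_apply]
    rw [Finset.sum_range_succ, Finset.sum_range_succ, Finset.sum_range_one]
    rw [itDW_eq φ hφ h (by norm_num) (Set.left_mem_Icc.mpr h.le),
        itDW_eq φ hφ h (by norm_num) (Set.left_mem_Icc.mpr h.le),
        itDW_eq φ hφ h (by norm_num) (Set.left_mem_Icc.mpr h.le)]
    simp [iteratedDeriv_zero, Nat.factorial]
    ring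
  rw [itDW_eq φ hφ h (by norm_num) (Set.mem_Icc.mpr ⟨hξ.1.le, hξ.2.le⟩)] at hrem
  have key : φ y - φ a - deriv φ a * (y - a) - iteratedDeriv 2 φ a / 2 * (y - a) ^ 2
      = iteratedDeriv 3 φ ξ * (y - a) ^ 3 / 6 := by
    have := hrem
    rw [hP] at this
    simp [Nat.factorial] at this
    linarith [this]
  rw [key, abs_div, abs_mul, abs_pow, abs_of_pos (sub_pos.mpr h)]
  rw [abs_of_nonneg (by norm_num : (0:ℝ) ≤ 6)]
  rw [div_le_iff₀ (by norm_num : (0:ℝ) < 6)]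
  calc |iteratedDeriv 3 φ ξ| * (y - a) ^ 3 ≤ M * (y - a) ^ 3 := by
        apply mul_le_mul_of_nonneg_right (hM ξ) (pow_nonneg (sub_pos.mpr h).le 3)
    _ = M / 6 * (y - a) ^ 3 * 6 := by ring

private lemma taylor_abs' (φ : ℝ → ℝ) (M : ℝ) (hφ : ContDiff ℝ 3 φ)
    (hM : ∀ t, |iteratedDeriv 3 φ t| ≤ M) (a y : ℝ) :
    |φ y - φ a - deriv φ a * (y - a) - iteratedDeriv 2 φ a / 2 * (y - a) ^ 2|
      ≤ M / 6 * |y - a| ^ 3 := by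
  have hM0 : 0 ≤ M := le_trans (abs_nonneg _) (hM a)
  rcases lt_trichotomy a y with h | rfl | h
  · have := taylor_right_aux φ M hφ hM h
    rw [iteratedDeriv_one] at this
    rwa [abs_of_pos (sub_pos.mpr h)]
  · simp
  · set g : ℝ → ℝ := fun t => φ (2 * a + -t) with hgdef
    have hgφ : ∀ (n : ℕ) (t : ℝ), iteratedDeriv n g t = (-1 : ℝ) ^ n * iteratedDeriv n φ (2 * a - t) := by
      intro n t
      have h1 : iteratedDeriv n g t = (-1 : ℝ) ^ n • iteratedDeriv n (fun z => φ (2 * a + z)) (-t) :=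
        iteratedDeriv_comp_neg n (fun z => φ (2 * a + z)) t
      rw [h1, iteratedDeriv_comp_const_add]
      simp [sub_eq_add_neg]
    have hg : ContDiff ℝ 3 g :=
      hφ.comp ((contDiff_const).add contDiff_neg)
    have hMg : ∀ t, |iteratedDeriv 3 g t| ≤ M := by
      intro t
      rw [hgφ]
      simp only [abs_mul, abs_pow, abs_neg, abs_one, one_pow, one_mul]
      exact hM _
    have h2 : a < 2 * a - y := by linarith
    have := taylor_right_aux g M hg hMg h2
    rw [hgφ 1 a, hgφ 2 a] at this
    have e0 : g (2 * a - y) = φ y := by simp [hgdef]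
    have e1 : g a = φ a := by simp [hgdef]; ring_nf
    have e2 : (2 : ℝ) * a - a = a := by ring
    rw [e0, e1, e2] at this
    have e3 : iteratedDeriv 1 φ a = deriv φ a := by rw [iteratedDeriv_one]
    rw [e3] at this
    have habs : |y - a| = a - y := by rw [abs_sub_comm, abs_of_pos (sub_pos.mpr h)]
    calc |φ y - φ a - deriv φ a * (y - a) - iteratedDeriv 2 φ a / 2 * (y - a) ^ 2|
        = |φ y - φ a - (-1:ℝ)^1 * deriv φ a * (2*a - y - a) -
            (-1:ℝ)^2 * iteratedDeriv 2 φ a / 2 * (2*a - y - a) ^ 2| := by ring_nf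
      _ ≤ M / 6 * (2*a - y - a) ^ 3 := this
      _ = M / 6 * |y - a| ^ 3 := by rw [habs]; ring_nf

/-- The least-squares difference operator for the first derivative on irregular
nodes is second-order accurate (first component of Eq. (11) of the paper). -/
theorem irregular_first_derivative_error_bound
    (φ : ℝ → ℝ) (M a ε : ℝ) (J : ℕ) (x : Fin J → ℝ)
    (hφ : ContDiff ℝ 3 φ)
    (hM : ∀ t : ℝ, |iteratedDeriv 3 φ t| ≤ M)
    (hε : 0 < ε) (hx : ∀ j, |x j - a| ≤ ε) (c : ℝ) (hc : 0 < c)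
    (hΔ : c * ε ^ 6 ≤
      (∑ j, (x j - a) ^ 2) * (∑ j, (x j - a) ^ 4) - (∑ j, (x j - a) ^ 3) ^ 2) :
    |((∑ j, (x j - a) ^ 4) * (∑ j, (x j - a) * (φ (x j) - φ a)) -
        (∑ j, (x j - a) ^ 3) * (∑ j, (x j - a) ^ 2 * (φ (x j) - φ a))) /
        ((∑ j, (x j - a) ^ 2) * (∑ j, (x j - a) ^ 4) - (∑ j, (x j - a) ^ 3) ^ 2) -
      deriv φ a|
      ≤ (J ^ 2 * M / (3 * c)) * ε ^ 2 := by
  have hM0 : 0 ≤ M := le_trans (abs_nonneg _) (hM a)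
  set d : Fin J → ℝ := fun j => x j - a with hd
  set D : ℝ := deriv φ a
  set C : ℝ := iteratedDeriv 2 φ a / 2
  set R : Fin J → ℝ := fun j => φ (x j) - φ a - D * d j - C * (d j) ^ 2 with hR
  have hRb : ∀ j, |R j| ≤ M / 6 * ε ^ 3 := by
    intro j
    calc |R j| ≤ M / 6 * |d j| ^ 3 := taylor_abs' φ M hφ hM a (x j)
      _ ≤ M / 6 * ε ^ 3 :=
          mul_le_mul_of_nonneg_left (pow_le_pow_left₀ (abs_nonneg _) (hx j) 3) (by positivity)
  have hb1 : (∑ j, d j * (φ (x j) - φ a))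
      = D * (∑ j, (d j) ^ 2) + C * (∑ j, (d j) ^ 3) + ∑ j, d j * R j := by
    rw [Finset.mul_sum, Finset.mul_sum, ← Finset.sum_add_distrib, ← Finset.sum_add_distrib]
    exact Finset.sum_congr rfl fun j _ => by simp only [hR]; ring
  have hb2 : (∑ j, (d j) ^ 2 * (φ (x j) - φ a))
      = D * (∑ j, (d j) ^ 3) + C * (∑ j, (d j) ^ 4) + ∑ j, (d j) ^ 2 * R j := by
    rw [Finset.mul_sum, Finset.mul_sum, ← Finset.sum_add_distrib, ← Finset.sum_add_distrib]
    exact Finset.sum_congr rfl fun j _ => by simp only [hR]; ring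
  set S2 : ℝ := ∑ j, (d j) ^ 2
  set S3 : ℝ := ∑ j, (d j) ^ 3
  set S4 : ℝ := ∑ j, (d j) ^ 4
  set Δ : ℝ := S2 * S4 - S3 ^ 2 with hΔdef
  have hΔpos : 0 < Δ := lt_of_lt_of_le (by positivity) hΔ
  set E : ℝ := S4 * (∑ j, d j * R j) - S3 * (∑ j, (d j) ^ 2 * R j) with hE
  have hnum : S4 * (∑ j, d j * (φ (x j) - φ a)) - S3 * (∑ j, (d j) ^ 2 * (φ (x j) - φ a))
      = D * Δ + E := by rw [hb1, hb2]; simp only [hΔdef, hE]; ring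
  have hgoal : (S4 * (∑ j, d j * (φ (x j) - φ a)) -
      S3 * (∑ j, (d j) ^ 2 * (φ (x j) - φ a))) / Δ - D = E / Δ := by
    rw [hnum]; field_simp; ring
  rw [hgoal, abs_div, abs_of_pos hΔpos]
  have hS4 : |S4| ≤ J * ε ^ 4 := by
    rw [abs_of_nonneg (Finset.sum_nonneg fun j _ => by positivity)]
    calc S4 ≤ ∑ _j : Fin J, ε ^ 4 := by
          apply Finset.sum_le_sum
          intro j _
          calc (d j) ^ 4 ≤ |d j| ^ 4 := le_abs_self _ |>.trans_eq (abs_pow _ _)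
            _ ≤ ε ^ 4 := pow_le_pow_left₀ (abs_nonneg _) (hx j) 4
      _ = J * ε ^ 4 := by simp [Finset.sum_const, nsmul_eq_mul]
  have hS3 : |S3| ≤ J * ε ^ 3 := by
    calc |S3| ≤ ∑ j, |(d j) ^ 3| := Finset.abs_sum_le_sum_abs _ _
      _ ≤ ∑ _j : Fin J, ε ^ 3 := by
          apply Finset.sum_le_sum
          intro j _
          rw [abs_pow]
          exact pow_le_pow_left₀ (abs_nonneg _) (hx j) 3
      _ = J * ε ^ 3 := by simp [Finset.sum_const, nsmul_eq_mul]
  have hdR : |∑ j, d j * R j| ≤ J * (ε * (M / 6 * ε ^ 3)) := by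
    calc |∑ j, d j * R j| ≤ ∑ j, |d j * R j| := Finset.abs_sum_le_sum_abs _ _
      _ ≤ ∑ _j : Fin J, ε * (M / 6 * ε ^ 3) := by
          apply Finset.sum_le_sum
          intro j _
          rw [abs_mul]
          exact mul_le_mul (hx j) (hRb j) (abs_nonneg _) hε.le
      _ = J * (ε * (M / 6 * ε ^ 3)) := by simp [Finset.sum_const, nsmul_eq_mul]
  have hd2R : |∑ j, (d j) ^ 2 * R j| ≤ J * (ε ^ 2 * (M / 6 * ε ^ 3)) := by
    calc |∑ j, (d j) ^ 2 * R j| ≤ ∑ j, |(d j) ^ 2 * R j| := Finset.abs_sum_le_sum_abs _ _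
      _ ≤ ∑ _j : Fin J, ε ^ 2 * (M / 6 * ε ^ 3) := by
          apply Finset.sum_le_sum
          intro j _
          rw [abs_mul, abs_pow]
          exact mul_le_mul (pow_le_pow_left₀ (abs_nonneg _) (hx j) 2) (hRb j)
            (abs_nonneg _) (by positivity)
      _ = J * (ε ^ 2 * (M / 6 * ε ^ 3)) := by simp [Finset.sum_const, nsmul_eq_mul]
  have hEbound : |E| ≤ J ^ 2 * M * ε ^ 8 / 3 := by
    calc |E| ≤ |S4| * |∑ j, d j * R j| + |S3| * |∑ j, (d j) ^ 2 * R j| := by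
          rw [hE]
          calc |S4 * (∑ j, d j * R j) - S3 * (∑ j, (d j) ^ 2 * R j)|
              ≤ |S4 * (∑ j, d j * R j)| + |S3 * (∑ j, (d j) ^ 2 * R j)| := abs_sub _ _
            _ = |S4| * |∑ j, d j * R j| + |S3| * |∑ j, (d j) ^ 2 * R j| := by
                rw [abs_mul, abs_mul]
      _ ≤ (J * ε ^ 4) * (J * (ε * (M / 6 * ε ^ 3)))
            + (J * ε ^ 3) * (J * (ε ^ 2 * (M / 6 * ε ^ 3))) :=
          add_le_add (mul_le_mul hS4 hdR (abs_nonneg _) (by positivity))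
            (mul_le_mul hS3 hd2R (abs_nonneg _) (by positivity))
      _ = J ^ 2 * M * ε ^ 8 / 3 := by ring
  calc |E| / Δ ≤ (J ^ 2 * M * ε ^ 8 / 3) / (c * ε ^ 6) :=
        div_le_div₀ (by positivity) hEbound (by positivity) hΔ
    _ = (J ^ 2 * M / (3 * c)) * ε ^ 2 := by field_simp
end

section
/- Let φ : ℝ → ℝ be three times continuously differentiable with |φ'''(t)| ≤ M for all t, let a ∈ ℝ, ε > 0, J ∈ ℕ, and let x : Fin J → ℝ satisfy |x j - a| ≤ ε for all j; write d j = x j - a, S2 = Σ_j (d j)², S3 = Σ_j (d j)³, S4 = Σ_j (d j)⁴, Δ = S2·S4 - S3², b1 = Σ_j (d j)·(φ(x j) - φ(a)), b2 = Σ_j (d j)²·(φ(x j) - φ(a)). Assume Δ ≥ c·ε⁶ for some c > 0, and define the least-squares second-derivative estimate a2 = (S2·b2 - S3·b1)/Δ. Then |a2 - (1/2)·φ''(a)| ≤ (J²·M/(3c))·ε. -/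
open Set Finset

/-- On a set with unique differentiability, the iterated derivative within agrees with the
full iterated derivative, for a globally `C^n` function. -/
lemma iteratedDerivWithin_eq_iteratedDeriv_of_contDiff
    {φ : ℝ → ℝ} (hφ : ContDiff ℝ 3 φ) {s : Set ℝ} (hs : UniqueDiffOn ℝ s)
    {x : ℝ} (hx : x ∈ s) {m : ℕ} (hm : (m : ℕ∞) ≤ 3) :
    iteratedDerivWithin m φ s x = iteratedDeriv m φ x := by
  have hφ' : ContDiff ℝ ((3 : ℕ∞) : WithTop ℕ∞) φ := by exact_mod_cast hφ
  have H : HasFTaylorSeriesUpToOn ((3 : ℕ∞) : WithTop ℕ∞) φ (ftaylorSeries ℝ φ) s :=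
    (contDiff_iff_ftaylorSeries.mp hφ').hasFTaylorSeriesUpToOn s
  have hm' : ((m : ℕ∞) : WithTop ℕ∞) ≤ ((3 : ℕ∞) : WithTop ℕ∞) := by exact_mod_cast hm
  have h := H.eq_iteratedFDerivWithin_of_uniqueDiffOn hm' hs hx
  rw [iteratedDerivWithin_eq_iteratedFDerivWithin, iteratedDeriv_eq_iteratedFDeriv, ← h]
  rfl

/-- One-sided (right) second-order Taylor bound. -/
lemma taylor2_bound_right (φ : ℝ → ℝ) (M a y : ℝ) (hφ : ContDiff ℝ 3 φ)
    (hM : ∀ t : ℝ, |iteratedDeriv 3 φ t| ≤ M) (hay : a ≤ y) :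
    |φ y - φ a - deriv φ a * (y - a) - iteratedDeriv 2 φ a / 2 * (y - a) ^ 2|
      ≤ M * |y - a| ^ 3 / 6 := by
  rcases eq_or_lt_of_le hay with rfl | h
  · simp
  have hs : UniqueDiffOn ℝ (Icc a y) := uniqueDiffOn_Icc h
  have ha : a ∈ Icc a y := ⟨le_refl a, hay⟩
  have hEq : ∀ {m : ℕ}, (m : ℕ∞) ≤ 3 → ∀ t ∈ Icc a y,
      iteratedDerivWithin m φ (Icc a y) t = iteratedDeriv m φ t := fun hm t ht =>
    iteratedDerivWithin_eq_iteratedDeriv_of_contDiff hφ hs ht hm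
  have hf : ContDiffOn ℝ 2 φ (Icc a y) := (hφ.of_le (by norm_num)).contDiffOn
  have hf' : DifferentiableOn ℝ (iteratedDerivWithin 2 φ (Icc a y)) (Ioo a y) := by
    have hφ3 : ContDiff ℝ ((1 + 2 : ℕ) : WithTop ℕ∞) φ := by exact_mod_cast hφ
    have h1 : ContDiff ℝ ((1 : ℕ) : WithTop ℕ∞) (deriv^[2] φ) :=
      ContDiff.iterate_deriv' 1 2 hφ3
    have h2 : ContDiff ℝ ((1 : ℕ) : WithTop ℕ∞) (iteratedDeriv 2 φ) := by
      rw [iteratedDeriv_eq_iterate]; exact h1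
    have h3 : DifferentiableOn ℝ (iteratedDeriv 2 φ) (Ioo a y) :=
      (h2.differentiable (by norm_num)).differentiableOn
    exact h3.congr fun t ht => hEq (by norm_num) t (Ioo_subset_Icc_self ht)
  obtain ⟨x', hx', hT⟩ := taylor_mean_remainder_lagrange (n := 2) h.ne
    (by rw [uIcc_of_le hay]; exact hf) (by rw [uIcc_of_le hay, uIoo_of_lt h]; exact hf')
  rw [uIoo_of_lt h] at hx'
  rw [uIcc_of_le hay] at hT
  have hTaylorEval : taylorWithinEval φ 2 (Icc a y) a y =
      φ a + deriv φ a * (y - a) + iteratedDeriv 2 φ a / 2 * (y - a) ^ 2 := by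
    rw [taylor_within_apply, Finset.sum_range_succ, Finset.sum_range_succ,
      Finset.sum_range_one]
    rw [hEq (by norm_num) a ha, hEq (by norm_num) a ha, hEq (by norm_num) a ha]
    simp only [iteratedDeriv_zero, iteratedDeriv_one, smul_eq_mul, Nat.factorial]
    norm_num
    ring
  have hrem : φ y - φ a - deriv φ a * (y - a) - iteratedDeriv 2 φ a / 2 * (y - a) ^ 2 =
      iteratedDerivWithin 3 φ (Icc a y) x' * (y - a) ^ 3 / 6 := by
    have := hT
    rw [hTaylorEval] at this
    norm_num [Nat.factorial] at this ⊢
    linarith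
  rw [hrem, hEq (le_refl _) x' (Ioo_subset_Icc_self hx')]
  rw [abs_div, abs_mul, abs_pow]
  have : |(6 : ℝ)| = 6 := by norm_num
  rw [this]
  gcongr
  exact hM x'

/-- Two-sided second-order Taylor bound. -/
lemma taylor2_bound (φ : ℝ → ℝ) (M a y : ℝ) (hφ : ContDiff ℝ 3 φ)
    (hM : ∀ t : ℝ, |iteratedDeriv 3 φ t| ≤ M) :
    |φ y - φ a - deriv φ a * (y - a) - iteratedDeriv 2 φ a / 2 * (y - a) ^ 2|
      ≤ M * |y - a| ^ 3 / 6 := by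
  rcases le_total a y with hay | hya
  · exact taylor2_bound_right φ M a y hφ hM hay
  · -- reflect: ψ t = φ (2a + (-t))
    set ψ : ℝ → ℝ := fun t => φ (2 * a + -t) with hψ
    have hψc : ContDiff ℝ 3 ψ :=
      hφ.comp ((contDiff_const.add contDiff_neg) : ContDiff ℝ 3 fun t : ℝ => 2 * a + -t)
    have hiter : ∀ (n : ℕ) (t : ℝ),
        iteratedDeriv n ψ t = (-1 : ℝ) ^ n * iteratedDeriv n φ (2 * a + -t) := by
      intro n t
      have h1 : iteratedDeriv n ψ t =
          (-1 : ℝ) ^ n • iteratedDeriv n (fun z => φ (2 * a + z)) (-t) :=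
        iteratedDeriv_comp_neg n (fun z => φ (2 * a + z)) t
      rw [h1, iteratedDeriv_comp_const_add, smul_eq_mul]
    have hψM : ∀ t : ℝ, |iteratedDeriv 3 ψ t| ≤ M := by
      intro t
      rw [hiter 3 t, abs_mul]
      simpa using hM (2 * a + -t)
    have key := taylor2_bound_right ψ M a (2 * a - y) hψc hψM (by linarith)
    have e0 : ψ (2 * a - y) = φ y := by simp [hψ]
    have e1 : deriv ψ a = -deriv φ a := by
      have := hiter 1 a
      rw [iteratedDeriv_one] at this
      rw [this, iteratedDeriv_one]
      norm_num
      ring_nf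
    have e2 : iteratedDeriv 2 ψ a = iteratedDeriv 2 φ a := by
      have := hiter 2 a
      rw [this]
      norm_num
      ring_nf
    have e3 : ψ a = φ a := by simp [hψ]; ring_nf
    rw [e0, e1, e2, e3] at key
    have earg : (2 * a - y - a) = -(y - a) := by ring
    rw [earg, abs_neg] at key
    calc |φ y - φ a - deriv φ a * (y - a) - iteratedDeriv 2 φ a / 2 * (y - a) ^ 2|
        = |φ y - φ a - -deriv φ a * -(y - a) - iteratedDeriv 2 φ a / 2 * (-(y - a)) ^ 2| := by
          ring_nf
      _ ≤ M * |y - a| ^ 3 / 6 := key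

/-- The least-squares difference operator for the second derivative on irregular
nodes is only first-order accurate (second component of Eq. (11) of the paper). -/
theorem irregular_second_derivative_error_bound
    (φ : ℝ → ℝ) (M a ε : ℝ) (J : ℕ) (x : Fin J → ℝ)
    (hφ : ContDiff ℝ 3 φ)
    (hM : ∀ t : ℝ, |iteratedDeriv 3 φ t| ≤ M)
    (hε : 0 < ε) (hx : ∀ j, |x j - a| ≤ ε) (c : ℝ) (hc : 0 < c)
    (hΔ : c * ε ^ 6 ≤
      (∑ j, (x j - a) ^ 2) * (∑ j, (x j - a) ^ 4) - (∑ j, (x j - a) ^ 3) ^ 2) :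
    |((∑ j, (x j - a) ^ 2) * (∑ j, (x j - a) ^ 2 * (φ (x j) - φ a)) -
        (∑ j, (x j - a) ^ 3) * (∑ j, (x j - a) * (φ (x j) - φ a))) /
        ((∑ j, (x j - a) ^ 2) * (∑ j, (x j - a) ^ 4) - (∑ j, (x j - a) ^ 3) ^ 2) -
      (1 / 2) * iteratedDeriv 2 φ a|
      ≤ (J ^ 2 * M / (3 * c)) * ε := by
  set d : Fin J → ℝ := fun j => x j - a with hd
  set R : Fin J → ℝ := fun j =>
    φ (x j) - φ a - deriv φ a * d j - iteratedDeriv 2 φ a / 2 * (d j) ^ 2 with hR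
  have hM0 : 0 ≤ M := le_trans (abs_nonneg _) (hM 0)
  have hRb : ∀ j, |R j| ≤ M * ε ^ 3 / 6 := by
    intro j
    calc |R j| ≤ M * |x j - a| ^ 3 / 6 := taylor2_bound φ M a (x j) hφ hM
      _ ≤ M * ε ^ 3 / 6 := by
          have h3 : |x j - a| ^ 3 ≤ ε ^ 3 := pow_le_pow_left₀ (abs_nonneg _) (hx j) 3
          nlinarith [mul_nonneg hM0 (sub_nonneg.mpr h3)]
  set S2 := ∑ j, (d j) ^ 2 with hS2
  set S3 := ∑ j, (d j) ^ 3 with hS3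
  set S4 := ∑ j, (d j) ^ 4 with hS4
  set E1 := ∑ j, d j * R j with hE1
  set E2 := ∑ j, (d j) ^ 2 * R j with hE2
  set Δ := S2 * S4 - S3 ^ 2 with hΔdef
  have hΔpos : 0 < Δ := lt_of_lt_of_le (by positivity) hΔ
  -- numerator identity
  have hnum : S2 * (∑ j, (d j) ^ 2 * (φ (x j) - φ a)) -
      S3 * (∑ j, d j * (φ (x j) - φ a)) =
      iteratedDeriv 2 φ a / 2 * Δ + (S2 * E2 - S3 * E1) := by
    have hb2 : (∑ j, (d j) ^ 2 * (φ (x j) - φ a)) =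
        deriv φ a * S3 + iteratedDeriv 2 φ a / 2 * S4 + E2 := by
      rw [hS3, hS4, hE2, Finset.mul_sum, Finset.mul_sum, ← Finset.sum_add_distrib,
        ← Finset.sum_add_distrib]
      apply Finset.sum_congr rfl
      intro j _
      simp only [hR]
      ring
    have hb1 : (∑ j, d j * (φ (x j) - φ a)) =
        deriv φ a * S2 + iteratedDeriv 2 φ a / 2 * S3 + E1 := by
      rw [hS2, hS3, hE1, Finset.mul_sum, Finset.mul_sum, ← Finset.sum_add_distrib,
        ← Finset.sum_add_distrib]
      apply Finset.sum_congr rfl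
      intro j _
      simp only [hR]
      ring
    rw [hb1, hb2, hΔdef]
    ring
  -- bounds on sums
  have habs : ∀ (k : ℕ) (j : Fin J), |d j| ^ k ≤ ε ^ k := fun k j =>
    pow_le_pow_left₀ (abs_nonneg _) (hx j) k
  have hS2b : |S2| ≤ J * ε ^ 2 := by
    calc |S2| ≤ ∑ j, |(d j) ^ 2| := Finset.abs_sum_le_sum_abs _ _
      _ ≤ ∑ _j : Fin J, ε ^ 2 := Finset.sum_le_sum fun j _ => by
          rw [abs_pow]; exact habs 2 j
      _ = J * ε ^ 2 := by simp [Finset.sum_const, Finset.card_univ, mul_comm]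
  have hS3b : |S3| ≤ J * ε ^ 3 := by
    calc |S3| ≤ ∑ j, |(d j) ^ 3| := Finset.abs_sum_le_sum_abs _ _
      _ ≤ ∑ _j : Fin J, ε ^ 3 := Finset.sum_le_sum fun j _ => by
          rw [abs_pow]; exact habs 3 j
      _ = J * ε ^ 3 := by simp [Finset.sum_const, Finset.card_univ, mul_comm]
  have hE1b : |E1| ≤ J * (M * ε ^ 4 / 6) := by
    calc |E1| ≤ ∑ j, |d j * R j| := Finset.abs_sum_le_sum_abs _ _
      _ ≤ ∑ _j : Fin J, M * ε ^ 4 / 6 := by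
          apply Finset.sum_le_sum
          intro j _
          rw [abs_mul]
          calc |d j| * |R j| ≤ ε * (M * ε ^ 3 / 6) := by
                apply mul_le_mul (hx j) (hRb j) (abs_nonneg _) hε.le
            _ = M * ε ^ 4 / 6 := by ring
      _ = J * (M * ε ^ 4 / 6) := by simp [Finset.sum_const, Finset.card_univ, mul_comm]
  have hE2b : |E2| ≤ J * (M * ε ^ 5 / 6) := by
    calc |E2| ≤ ∑ j, |(d j) ^ 2 * R j| := Finset.abs_sum_le_sum_abs _ _
      _ ≤ ∑ _j : Fin J, M * ε ^ 5 / 6 := by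
          apply Finset.sum_le_sum
          intro j _
          rw [abs_mul, abs_pow]
          calc |d j| ^ 2 * |R j| ≤ ε ^ 2 * (M * ε ^ 3 / 6) := by
                apply mul_le_mul (habs 2 j) (hRb j) (abs_nonneg _) (by positivity)
            _ = M * ε ^ 5 / 6 := by ring
      _ = J * (M * ε ^ 5 / 6) := by simp [Finset.sum_const, Finset.card_univ, mul_comm]
  -- main estimate
  have hkey : (S2 * (∑ j, (d j) ^ 2 * (φ (x j) - φ a)) -
      S3 * (∑ j, d j * (φ (x j) - φ a))) / Δ - (1 / 2) * iteratedDeriv 2 φ a =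
      (S2 * E2 - S3 * E1) / Δ := by
    rw [hnum]
    field_simp
    ring
  have hnumb : |S2 * E2 - S3 * E1| ≤ J ^ 2 * M * ε ^ 7 / 3 := by
    calc |S2 * E2 - S3 * E1| ≤ |S2 * E2| + |S3 * E1| := abs_sub _ _
      _ = |S2| * |E2| + |S3| * |E1| := by rw [abs_mul, abs_mul]
      _ ≤ (J * ε ^ 2) * (J * (M * ε ^ 5 / 6)) + (J * ε ^ 3) * (J * (M * ε ^ 4 / 6)) := by
          gcongr <;> first
            | exact abs_nonneg _
            | assumption
      _ = J ^ 2 * M * ε ^ 7 / 3 := by ring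
  rw [hkey]
  rw [abs_div, abs_of_pos hΔpos]
  calc |S2 * E2 - S3 * E1| / Δ ≤ (J ^ 2 * M * ε ^ 7 / 3) / (c * ε ^ 6) :=
        div_le_div₀ (by positivity) hnumb (by positivity) hΔ
      _ = (J ^ 2 * M / (3 * c)) * ε := by
        field_simp
end
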